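/- Conversely to the previous statement: let L : N₁ → N₂ be a lattice homomorphism mapping σ into δ (full-dimensional simplicial cones with free-nets σ^0, δ^0). If the dual map L^∨ ⊗ ℚ maps F_δ = { m ∈ M₂ ⊗ ℚ : ⟨m, δ^0⟩ ⊆ ℤ_{≥0} } into F_σ = { m ∈ M₁ ⊗ ℚ : ⟨m, σ^0⟩ ⊆ ℤ_{≥0} }, then L(σ^0) ⊆ δ^0. -/

import Mathlib

/-- converse of 12: With `L : N₁ → N₂` mapping the cone `σ`
(spanned by the free-net generators `η₁ i`) into `δ` (spanned by `η₂ i`),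
if the dual map `L^∨ ⊗ ℚ` maps `F_δ` into `F_σ` — i.e. (by adjunction
`⟨L^∨ m, s⟩ = ⟨m, L s⟩`) for every `m` with `⟨m, s⟩ ∈ ℤ_{≥0}` for all
`s ∈ δ^0` one has `⟨m, L s⟩ ∈ ℤ_{≥0}` for all `s ∈ σ^0` — then
`L(σ^0) ⊆ δ^0`. -/
theorem stmt13 {d₁ d₂ : ℕ} (η₁ : Fin d₁ → (Fin d₁ → ℤ)) (η₂ : Fin d₂ → (Fin d₂ → ℤ))
    (hlin₁ : LinearIndependent ℚ fun i => fun j => (η₁ i j : ℚ))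
    (hlin₂ : LinearIndependent ℚ fun i => fun j => (η₂ i j : ℚ))
    (L : (Fin d₁ → ℤ) →+ (Fin d₂ → ℤ))
    (hcone : ∀ i, ∃ c : Fin d₂ → ℚ, (∀ j, 0 ≤ c j) ∧
      ∀ k, ((L (η₁ i)) k : ℚ) = ∑ j, c j * (η₂ j k : ℚ))
    (hdual : ∀ m : Fin d₂ → ℚ,
      (∀ s ∈ AddSubmonoid.closure (Set.range η₂),
        ∃ k : ℕ, ∑ j, m j * (s j : ℚ) = (k : ℚ)) →
      ∀ s ∈ AddSubmonoid.closure (Set.range η₁),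
        ∃ k : ℕ, ∑ j, m j * ((L s) j : ℚ) = (k : ℚ)) :
    ∀ x ∈ AddSubmonoid.closure (Set.range η₁),
      L x ∈ AddSubmonoid.closure (Set.range η₂) := by
  rcases Nat.eq_zero_or_pos d₂ with hd0 | hd0
  · intro x hx
    have : L x = 0 := by
      funext j; exact absurd (j.isLt) (by omega)
    rw [this]; exact zero_mem _
  have : Nonempty (Fin d₂) := ⟨⟨0, hd0⟩⟩
  have hcard : Fintype.card (Fin d₂) = Module.finrank ℚ (Fin d₂ → ℚ) := by
    simp [Module.finrank_fintype_fun_eq_card]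
  set b := basisOfLinearIndependentOfCardEqFinrank hlin₂ hcard with hbdef
  have hb : ∀ i, b i = fun j => (η₂ i j : ℚ) := fun i => by
    rw [hbdef, coe_basisOfLinearIndependentOfCardEqFinrank]
  -- key: generators go into the closure
  have key : ∀ i, L (η₁ i) ∈ AddSubmonoid.closure (Set.range η₂) := by
    intro i
    obtain ⟨c, hc0, hc⟩ := hcone i
    -- for each j, c j is a natural number
    have hnat : ∀ j : Fin d₂, ∃ n : ℕ, c j = (n : ℚ) := by
      intro j
      set m : Fin d₂ → ℚ := fun k => b.coord j (fun t => if k = t then 1 else 0) with hm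
      have pair : ∀ v : Fin d₂ → ℚ, ∑ k, m k * v k = b.coord j v := by
        intro v
        rw [LinearMap.pi_apply_eq_sum_univ (b.coord j) v]
        exact Finset.sum_congr rfl fun k _ => by rw [smul_eq_mul, mul_comm]
      have hcoordb : ∀ t : Fin d₂, b.coord j (b t) = if t = j then 1 else 0 := by
        intro t
        rw [Module.Basis.coord_apply, Module.Basis.repr_self]
        simp [Finsupp.single_apply]
      have hhyp : ∀ s ∈ AddSubmonoid.closure (Set.range η₂),
          ∃ k : ℕ, ∑ j', m j' * (s j' : ℚ) = (k : ℚ) := by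
        intro s hs
        induction hs using AddSubmonoid.closure_induction with
        | mem x hx =>
          obtain ⟨t, rfl⟩ := hx
          refine ⟨if t = j then 1 else 0, ?_⟩
          have : (fun j' => ((η₂ t) j' : ℚ)) = b t := (hb t).symm
          rw [pair (fun j' => ((η₂ t) j' : ℚ)), this, hcoordb]
          split <;> simp
        | zero => exact ⟨0, by simp⟩
        | add x y _ _ hx hy =>
          obtain ⟨kx, hkx⟩ := hx
          obtain ⟨ky, hky⟩ := hy
          refine ⟨kx + ky, ?_⟩
          push_cast
          rw [← hkx, ← hky, ← Finset.sum_add_distrib]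
          exact Finset.sum_congr rfl fun j' _ => by push_cast [Pi.add_apply]; ring
      obtain ⟨n, hn⟩ := hdual m hhyp (η₁ i)
        (AddSubmonoid.subset_closure (Set.mem_range_self i))
      refine ⟨n, ?_⟩
      have hv : (fun k => ((L (η₁ i)) k : ℚ)) = ∑ t, c t • b t := by
        funext k
        rw [hc k]
        simp [hb, Finset.sum_apply, smul_eq_mul]
      have : ∑ j', m j' * ((L (η₁ i)) j' : ℚ) = c j := by
        rw [pair, show (fun k => ((L (η₁ i)) k : ℚ)) = ∑ t, c t • b t from hv,
          map_sum]
        simp only [map_smul, hcoordb, smul_eq_mul]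
        rw [Finset.sum_eq_single j] <;> simp_all
      rw [← this, hn]
    choose n hn using hnat
    have heq : L (η₁ i) = ∑ t, n t • η₂ t := by
      funext k
      have : ((L (η₁ i)) k : ℚ) = (((∑ t, n t • η₂ t) k : ℤ) : ℚ) := by
        rw [hc k]
        push_cast [Finset.sum_apply]
        exact Finset.sum_congr rfl fun t _ => by push_cast [Pi.smul_apply, nsmul_eq_mul]; rw [hn t]
      exact_mod_cast this
    rw [heq]
    exact AddSubmonoid.sum_mem _ fun t _ =>
      AddSubmonoid.nsmul_mem _ (AddSubmonoid.subset_closure (Set.mem_range_self t)) _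
  intro x hx
  induction hx using AddSubmonoid.closure_induction with
  | mem y hy => obtain ⟨i, rfl⟩ := hy; exact key i
  | zero => rw [map_zero]; exact zero_mem _
  | add y z _ _ hy hz => rw [map_add]; exact add_mem hy hz
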